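/- Let 𝒞 be a category with all small colimits and let F : WalkingSpan ⥤ 𝒞 be a span diagram with F(left) = A, F(zero) = B, F(right) = C. Let i : WalkingSpan ⥤ Δᵒᵖ be the functor sending left and right to [0], zero to [1], and the morphisms fst, snd to the opposites of the two coface maps δ¹, δ⁰ : [0] → [1]. Then the (pointwise) left Kan extension Lan_i F : Δᵒᵖ ⥤ 𝒞 exists and, for every natural number n, its value at [n] is isomorphic to the coproduct A ⨿ (⨿_{j ∈ Fin n} B) ⨿ C of A, n copies of B, and C. -/

import Mathlib

open CategoryTheory CategoryTheory.Limits Opposite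

universe v u

/-- The functor `WalkingSpan ⥤ Δᵒᵖ` sending `left` and `right` to `[0]`, `zero` to `[1]`,
and the morphisms `fst`, `snd` to the opposites of the coface maps
`δ¹, δ⁰ : [0] ⟶ [1]` respectively. -/
noncomputable def barIndex : WalkingSpan ⥤ SimplexCategoryᵒᵖ :=
  span (SimplexCategory.δ (1 : Fin 2)).op (SimplexCategory.δ (0 : Fin 2)).op

namespace BarAux

variable {n : ℕ}

def cnt (φ : Fin (n+1) →o Fin 2) : ℕ := (Finset.univ.filter fun i => φ i = 0).card

lemma cnt_def (φ : Fin (n+1) →o Fin 2) :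
    cnt φ = (Finset.univ.filter fun i => φ i = 0).card := rfl

lemma cnt_le (φ : Fin (n+1) →o Fin 2) : cnt φ ≤ n + 1 := by
  simpa [cnt] using (Finset.card_filter_le Finset.univ fun i => φ i = 0).trans (by simp)

lemma fin2_le {a : Fin 2} (h : a ≤ 0) : a = 0 := le_antisymm h (Fin.zero_le a)

lemma apply_eq_zero_iff (φ : Fin (n+1) →o Fin 2) (i : Fin (n+1)) :
    φ i = 0 ↔ (i : ℕ) < cnt φ := by
  constructor
  · intro h
    have hsub : Finset.Iic i ⊆ Finset.univ.filter fun j => φ j = 0 := by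
      intro j hj
      simp only [Finset.mem_Iic] at hj
      simp only [Finset.mem_filter, Finset.mem_univ, true_and]
      exact fin2_le (h ▸ φ.monotone hj)
    have h2 := Finset.card_le_card hsub
    rw [Fin.card_Iic] at h2
    have h3 := cnt_def φ
    omega
  · intro h
    by_contra h'
    have h1 : φ i = 1 := by omega
    have hsub : (Finset.univ.filter fun j => φ j = 0) ⊆ Finset.Iio i := by
      intro j hj
      simp only [Finset.mem_filter, Finset.mem_univ, true_and] at hj
      simp only [Finset.mem_Iio]
      by_contra hji
      have hle : (1 : Fin 2) ≤ 0 := by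
        calc (1 : Fin 2) = φ i := h1.symm
        _ ≤ φ j := φ.monotone (le_of_not_gt hji)
        _ = 0 := hj
      exact absurd hle (by decide)
    have h2 := Finset.card_le_card hsub
    rw [Fin.card_Iio] at h2
    have h3 := cnt_def φ
    omega

def fmk (k : Fin (n+2)) : Fin (n+1) →o Fin 2 :=
  ⟨fun i => if (i : ℕ) < (k : ℕ) then 0 else 1, by
    intro i j hij
    dsimp only
    by_cases hj : (j : ℕ) < (k : ℕ)
    · rw [if_pos (lt_of_le_of_lt (show (i:ℕ) ≤ j from hij) hj), if_pos hj]
    · rw [if_neg hj]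
      exact Fin.le_last _⟩

lemma fmk_apply (k : Fin (n+2)) (i : Fin (n+1)) :
    fmk k i = if (i : ℕ) < (k : ℕ) then 0 else 1 := rfl

lemma cnt_fmk (k : Fin (n+2)) : cnt (fmk k) = (k : ℕ) := by
  have hk : (k : ℕ) ≤ n + 1 := by omega
  have hc := cnt_le (fmk k)
  rcases lt_trichotomy (cnt (fmk k)) (k : ℕ) with h1 | h1 | h1
  · have h2 := (apply_eq_zero_iff (fmk k) ⟨cnt (fmk k), by omega⟩).mp
      (by rw [fmk_apply]; exact if_pos h1)
    simp at h2
  · exact h1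
  · have h2 := (apply_eq_zero_iff (fmk k) ⟨(k : ℕ), by omega⟩).mpr (by simpa using h1)
    rw [fmk_apply] at h2
    simp at h2
  
lemma eq_of_cnt_eq (φ ψ : Fin (n+1) →o Fin 2) (h : cnt φ = cnt ψ) : φ = ψ := by
  ext i
  have h1 := apply_eq_zero_iff φ i
  have h2 := apply_eq_zero_iff ψ i
  by_cases hz : (i : ℕ) < cnt φ
  · rw [h1.mpr hz, h2.mpr (h ▸ hz)]
  · have hφ : φ i = 1 := by
      have := (not_iff_not.mpr h1).mpr hz
      omega
    have hψ : ψ i = 1 := by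
      have := (not_iff_not.mpr h2).mpr (h ▸ hz)
      omega
    rw [hφ, hψ]

lemma cnt_of_all_zero (φ : Fin (n+1) →o Fin 2) (h : ∀ i, φ i = 0) : cnt φ = n + 1 := by
  rw [cnt_def]
  simp [h]

lemma cnt_of_all_one (φ : Fin (n+1) →o Fin 2) (h : ∀ i, φ i = 1) : cnt φ = 0 := by
  rw [cnt_def]
  simp [h]

lemma delta_one_apply (x : Fin 1) : (SimplexCategory.δ (1 : Fin 2)).toOrderHom x = 0 := by
  fin_cases x
  rfl

lemma delta_zero_apply (x : Fin 1) : (SimplexCategory.δ (0 : Fin 2)).toOrderHom x = 1 := by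
  fin_cases x
  rfl



section Main

variable {C : Type u} [Category.{v} C] [HasColimits C] (F : WalkingSpan ⥤ C) (n : ℕ)

noncomputable abbrev tgt : C :=
  F.obj WalkingSpan.left ⨿
    ((∐ fun (_ : Fin n) => F.obj WalkingSpan.zero) ⨿ F.obj WalkingSpan.right)

noncomputable def zeroMap (φ : Fin (n+1) →o Fin 2) : F.obj WalkingSpan.zero ⟶ tgt F n :=
  if h0 : cnt φ = 0 then F.map WalkingSpan.Hom.snd ≫ coprod.inr ≫ coprod.inr
  else if h : cnt φ ≤ n then
    Sigma.ι (fun (_ : Fin n) => F.obj WalkingSpan.zero) ⟨cnt φ - 1, by omega⟩ ≫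
      coprod.inl ≫ coprod.inr
  else F.map WalkingSpan.Hom.fst ≫ coprod.inl

noncomputable def app : ∀ (w : WalkingSpan),
    (barIndex.obj w ⟶ op (SimplexCategory.mk n)) → (F.obj w ⟶ tgt F n)
  | Option.none, φ => zeroMap F n φ.unop.toOrderHom
  | Option.some WalkingPair.left, _ => coprod.inl
  | Option.some WalkingPair.right, _ => coprod.inr ≫ coprod.inr

lemma unop_toOrderHom_comp_delta_one (yh : op (SimplexCategory.mk 0) ⟶ op (SimplexCategory.mk n))
    (i : Fin (n+1)) :
    ((SimplexCategory.δ (1 : Fin 2)).op ≫ yh).unop.toOrderHom i = 0 := by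
  have : ((SimplexCategory.δ (1 : Fin 2)).op ≫ yh).unop
      = yh.unop ≫ SimplexCategory.δ (1 : Fin 2) := rfl
  rw [this]
  exact delta_one_apply _

lemma unop_toOrderHom_comp_delta_zero (yh : op (SimplexCategory.mk 0) ⟶ op (SimplexCategory.mk n))
    (i : Fin (n+1)) :
    ((SimplexCategory.δ (0 : Fin 2)).op ≫ yh).unop.toOrderHom i = 1 := by
  have : ((SimplexCategory.δ (0 : Fin 2)).op ≫ yh).unop
      = yh.unop ≫ SimplexCategory.δ (0 : Fin 2) := rfl
  rw [this]
  exact delta_zero_apply _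

lemma zeroMap_of_cnt_top (φ : Fin (n+1) →o Fin 2) (h : cnt φ = n + 1) :
    zeroMap F n φ = F.map WalkingSpan.Hom.fst ≫ coprod.inl := by
  rw [zeroMap, dif_neg (by omega), dif_neg (by omega)]

lemma zeroMap_of_cnt_zero (φ : Fin (n+1) →o Fin 2) (h : cnt φ = 0) :
    zeroMap F n φ = F.map WalkingSpan.Hom.snd ≫ coprod.inr ≫ coprod.inr := by
  rw [zeroMap, dif_pos h]

lemma zeroMap_of_cnt_mid (φ : Fin (n+1) →o Fin 2) (h0 : cnt φ ≠ 0) (h : cnt φ ≤ n) :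
    zeroMap F n φ = Sigma.ι (fun (_ : Fin n) => F.obj WalkingSpan.zero)
      ⟨cnt φ - 1, by omega⟩ ≫ coprod.inl ≫ coprod.inr := by
  rw [zeroMap, dif_neg h0, dif_pos h]

noncomputable def cocone :
    Cocone (CostructuredArrow.proj barIndex (op (SimplexCategory.mk n)) ⋙ F) where
  pt := tgt F n
  ι :=
    { app := fun X => app F n X.left X.hom
      naturality := fun X Y g => by
        obtain ⟨xl, ⟨⟨⟩⟩, xh⟩ := X
        obtain ⟨yl, ⟨⟨⟩⟩, yh⟩ := Y
        obtain ⟨gl, gr, hg⟩ := g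
        simp only [Functor.const_obj_obj, Functor.const_obj_map, Category.comp_id]
        have hw : barIndex.map gl ≫ yh = xh := by simpa using hg
        change WidePushoutShape.Hom xl yl at gl
        cases gl with
        | id w =>
            have h1 : xh = yh := by simpa using hw.symm
            subst h1
            simp [CostructuredArrow.proj, WidePushoutShape.hom_id]
            exact (congrArg (fun g => g ≫ _) (F.map_id xl)).trans (Category.id_comp _)
        | init j =>
            cases j with
            | left =>
                have h1 : xh = (SimplexCategory.δ (1 : Fin 2)).op ≫ yh := by
                  rw [← hw]; rfl
                subst h1
                refine Eq.trans ?_ (Category.comp_id _).symm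
                show F.map WalkingSpan.Hom.fst ≫ app F n _ yh = app F n _ _
                have h2 : cnt ((SimplexCategory.δ (1 : Fin 2)).op ≫ yh).unop.toOrderHom
                    = n + 1 :=
                  cnt_of_all_zero _ (unop_toOrderHom_comp_delta_one n yh)
                show F.map WalkingSpan.Hom.fst ≫ coprod.inl = zeroMap F n _
                exact (zeroMap_of_cnt_top F n _ h2).symm
            | right =>
                have h1 : xh = (SimplexCategory.δ (0 : Fin 2)).op ≫ yh := by
                  rw [← hw]; rfl
                subst h1
                have h2 : cnt ((SimplexCategory.δ (0 : Fin 2)).op ≫ yh).unop.toOrderHom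
                    = 0 :=
                  cnt_of_all_one _ (unop_toOrderHom_comp_delta_zero n yh)
                refine Eq.trans ?_ (Category.comp_id _).symm
                show F.map WalkingSpan.Hom.snd ≫ coprod.inr ≫ coprod.inr = zeroMap F n _
                exact (zeroMap_of_cnt_zero F n _ h2).symm }

noncomputable def obLeft : CostructuredArrow barIndex (op (SimplexCategory.mk n)) :=
  CostructuredArrow.mk (Y := WalkingSpan.left)
    (show barIndex.obj WalkingSpan.left ⟶ op (SimplexCategory.mk n) from
      (SimplexCategory.const (SimplexCategory.mk n) (SimplexCategory.mk 0) 0).op)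

noncomputable def obRight : CostructuredArrow barIndex (op (SimplexCategory.mk n)) :=
  CostructuredArrow.mk (Y := WalkingSpan.right)
    (show barIndex.obj WalkingSpan.right ⟶ op (SimplexCategory.mk n) from
      (SimplexCategory.const (SimplexCategory.mk n) (SimplexCategory.mk 0) 0).op)

noncomputable def obZero (k : Fin (n+2)) :
    CostructuredArrow barIndex (op (SimplexCategory.mk n)) :=
  CostructuredArrow.mk (Y := WalkingSpan.zero)
    (show barIndex.obj WalkingSpan.zero ⟶ op (SimplexCategory.mk n) from
      (SimplexCategory.mkHom (fmk k)).op)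

noncomputable def myDesc
    (s : Cocone (CostructuredArrow.proj barIndex (op (SimplexCategory.mk n)) ⋙ F)) :
    tgt F n ⟶ s.pt :=
  coprod.desc (s.ι.app (obLeft n))
    (coprod.desc (Sigma.desc fun j => s.ι.app (obZero n ⟨(j : ℕ) + 1, by omega⟩))
      (s.ι.app (obRight n)))



lemma hom_to_zero_eq (xh : barIndex.obj (Option.some WalkingPair.left) ⟶ op (SimplexCategory.mk n)) :
    xh = (show barIndex.obj WalkingSpan.left ⟶ op (SimplexCategory.mk n) from
      (SimplexCategory.const (SimplexCategory.mk n) (SimplexCategory.mk 0) 0).op) := by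
  have h1 : (show SimplexCategory.mk n ⟶ SimplexCategory.mk 0 from xh.unop)
      = SimplexCategory.const (SimplexCategory.mk n) (SimplexCategory.mk 0) 0 :=
    Subsingleton.elim _ _
  have h2 := congrArg Quiver.Hom.op h1
  exact h2

lemma hom_to_zero_eq' (xh : barIndex.obj (Option.some WalkingPair.right) ⟶ op (SimplexCategory.mk n)) :
    xh = (show barIndex.obj WalkingSpan.right ⟶ op (SimplexCategory.mk n) from
      (SimplexCategory.const (SimplexCategory.mk n) (SimplexCategory.mk 0) 0).op) := by
  have h1 : (show SimplexCategory.mk n ⟶ SimplexCategory.mk 0 from xh.unop)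
      = SimplexCategory.const (SimplexCategory.mk n) (SimplexCategory.mk 0) 0 :=
    Subsingleton.elim _ _
  have h2 := congrArg Quiver.Hom.op h1
  exact h2

lemma exists_fmk (φ : Fin (n+1) →o Fin 2) : ∃ k : Fin (n+2), φ = fmk k := by
  have h := cnt_le φ
  refine ⟨⟨cnt φ, by omega⟩, eq_of_cnt_eq _ _ ?_⟩
  exact (cnt_fmk ⟨cnt φ, by omega⟩).symm

lemma app_obZero_congr (s : Cocone (CostructuredArrow.proj barIndex (op (SimplexCategory.mk n)) ⋙ F))
    {k k' : Fin (n+2)} (h : k = k') :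
    s.ι.app (obZero n k) = s.ι.app (obZero n k') := by subst h; rfl

lemma fac_left (s : Cocone (CostructuredArrow.proj barIndex (op (SimplexCategory.mk n)) ⋙ F)) :
    coprod.inl ≫ myDesc F n s = s.ι.app (obLeft n) := by exact coprod.inl_desc _ _

lemma fac_right (s : Cocone (CostructuredArrow.proj barIndex (op (SimplexCategory.mk n)) ⋙ F)) :
    (coprod.inr ≫ coprod.inr) ≫ myDesc F n s = s.ι.app (obRight n) := by
  simp only [Category.assoc]
  exact (congrArg (fun g => coprod.inr ≫ g) (coprod.inr_desc _ _)).trans (coprod.inr_desc _ _)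

lemma sigma_fac (s : Cocone (CostructuredArrow.proj barIndex (op (SimplexCategory.mk n)) ⋙ F))
    (i : Fin n) :
    (Sigma.ι (fun (_ : Fin n) => F.obj WalkingSpan.zero) i ≫ coprod.inl ≫ coprod.inr) ≫
        myDesc F n s
      = s.ι.app (obZero n ⟨(i : ℕ) + 1, by omega⟩) := by
  simp only [Category.assoc]
  exact (congrArg (fun g => Sigma.ι (fun (_ : Fin n) => F.obj WalkingSpan.zero) i ≫ coprod.inl ≫ g)
    (coprod.inr_desc _ _)).trans ((congrArg (fun g => Sigma.ι (fun (_ : Fin n) => F.obj WalkingSpan.zero) i ≫ g)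
    (coprod.inl_desc _ _)).trans (Sigma.ι_desc _ _))


lemma fac_zero (s : Cocone (CostructuredArrow.proj barIndex (op (SimplexCategory.mk n)) ⋙ F))
    (k : Fin (n+2)) :
    zeroMap F n (fmk k) ≫ myDesc F n s = s.ι.app (obZero n k) := by
  by_cases hk0 : (k : ℕ) = 0
  · rw [zeroMap_of_cnt_zero F n _ (by rw [cnt_fmk]; exact hk0)]
    have hx : barIndex.map WalkingSpan.Hom.snd ≫ (obRight n).hom = (obZero n k).hom := by
      apply Quiver.Hom.unop_inj
      apply SimplexCategory.Hom.ext
      apply OrderHom.ext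
      funext i
      show (SimplexCategory.δ (0 : Fin 2)).toOrderHom
          ((obRight n).hom.unop.toOrderHom i) = fmk k i
      rw [fmk_apply, if_neg (by omega)]
      exact delta_zero_apply _
    have hw : F.map WalkingSpan.Hom.snd ≫ s.ι.app (obRight n) = s.ι.app (obZero n k) :=
      s.w (CostructuredArrow.homMk (f := obZero n k) (f' := obRight n) WalkingSpan.Hom.snd hx)
    rw [← hw]
    have h1 := fac_right F n s
    simp only [Category.assoc] at h1 ⊢
    rw [← h1]
  · by_cases hkn : (k : ℕ) ≤ n
    · rw [zeroMap_of_cnt_mid F n (fmk k) (by rw [cnt_fmk]; omega) (by rw [cnt_fmk]; omega)]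
      rw [sigma_fac F n s _]
      refine app_obZero_congr F n s ?_
      apply Fin.ext
      show cnt (fmk k) - 1 + 1 = (k : ℕ)
      rw [cnt_fmk]
      omega
    · rw [zeroMap_of_cnt_top F n _ (by rw [cnt_fmk]; omega)]
      have hx : barIndex.map WalkingSpan.Hom.fst ≫ (obLeft n).hom = (obZero n k).hom := by
        apply Quiver.Hom.unop_inj
        apply SimplexCategory.Hom.ext
        apply OrderHom.ext
        funext i
        show (SimplexCategory.δ (1 : Fin 2)).toOrderHom
            ((obLeft n).hom.unop.toOrderHom i) = fmk k i
        rw [fmk_apply, if_pos (by omega)]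
        exact delta_one_apply _
      have hw : F.map WalkingSpan.Hom.fst ≫ s.ι.app (obLeft n) = s.ι.app (obZero n k) :=
        s.w (CostructuredArrow.homMk (f := obZero n k) (f' := obLeft n) WalkingSpan.Hom.fst hx)
      rw [← hw]
      have h1 := fac_left F n s
      simp only [Category.assoc] at h1 ⊢
      rw [← h1]

noncomputable def isColimit : IsColimit (cocone F n) where
  desc s := myDesc F n s
  fac s X := by
    obtain ⟨xl, ⟨⟨⟩⟩, xh⟩ := X
    match xl with
    | Option.some WalkingPair.left =>
        rw [hom_to_zero_eq n xh]
        show coprod.inl ≫ myDesc F n s = s.ι.app (obLeft n)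
        exact fac_left F n s
    | Option.some WalkingPair.right =>
        rw [hom_to_zero_eq' n xh]
        show (coprod.inr ≫ coprod.inr) ≫ myDesc F n s = s.ι.app (obRight n)
        exact fac_right F n s
    | Option.none =>
        obtain ⟨k, hk⟩ := exists_fmk (n := n) (xh.unop.toOrderHom : Fin (n+1) →o Fin 2)
        obtain ⟨k, rfl⟩ : ∃ k : Fin (n+2), xh = (SimplexCategory.mkHom (fmk k)).op := by
          refine ⟨k, ?_⟩
          have h1 : (xh.unop : SimplexCategory.mk n ⟶ SimplexCategory.mk 1)
              = SimplexCategory.mkHom (fmk k) := SimplexCategory.Hom.ext _ _ hk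
          have h2 := congrArg Quiver.Hom.op h1
          exact h2
        show zeroMap F n (fmk k) ≫ myDesc F n s = s.ι.app (obZero n k)
        exact fac_zero F n s k
  uniq s m hm := by
    apply coprod.hom_ext
    · have h1 := fac_left F n s
      exact (hm (obLeft n)).trans h1.symm
    · apply coprod.hom_ext
      · apply Sigma.hom_ext
        intro j
        have hj1 : ((j : ℕ) + 1) < n + 2 := by omega
        have hZ := hm (obZero n ⟨(j : ℕ) + 1, hj1⟩)
        have e1 : (cocone F n).ι.app (obZero n ⟨(j : ℕ) + 1, hj1⟩)
            = Sigma.ι (fun (_ : Fin n) => F.obj WalkingSpan.zero) j ≫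
                coprod.inl ≫ coprod.inr := by
          show zeroMap F n (fmk ⟨(j : ℕ) + 1, hj1⟩) = _
          rw [zeroMap_of_cnt_mid F n (fmk ⟨(j : ℕ) + 1, hj1⟩)
            (by rw [cnt_fmk]; show (j : ℕ) + 1 ≠ 0; omega)
            (by rw [cnt_fmk]; show (j : ℕ) + 1 ≤ n; omega)]
          have hfin : (⟨cnt (fmk (n := n) ⟨(j : ℕ) + 1, hj1⟩) - 1,
              by rw [cnt_fmk]; show (j : ℕ) + 1 - 1 < n; omega⟩ : Fin n) = j := by
            apply Fin.ext
            show cnt (fmk (n := n) ⟨(j : ℕ) + 1, hj1⟩) - 1 = (j : ℕ)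
            rw [cnt_fmk]
            show (j : ℕ) + 1 - 1 = (j : ℕ)
            omega
          rw [hfin]
        rw [e1] at hZ
        have hgoal := sigma_fac F n s j
        simp only [← Category.assoc] at hZ hgoal ⊢
        exact (Category.assoc _ _ _).symm.trans (hZ.trans hgoal.symm)
      · have h1 := fac_right F n s
        have h2 := (hm (obRight n)).trans h1.symm
        simp only [← Category.assoc] at h2 ⊢
        exact (Category.assoc _ _ _).symm.trans h2

end Main

end BarAux


/-- Lemma A.1 (pointwise description): the left Kan extension of a span diagram `F` along
`barIndex` exists and its value at `[n]` is `A ⨿ Bⁿ ⨿ C`. -/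
theorem leftKanExtension_along_barIndex_obj
    {C : Type u} [Category.{v} C] [HasColimits C] (F : WalkingSpan ⥤ C) :
    barIndex.HasPointwiseLeftKanExtension F ∧
      ∀ n : ℕ,
        Nonempty ((barIndex.pointwiseLeftKanExtension F).obj (op (SimplexCategory.mk n)) ≅
          F.obj WalkingSpan.left ⨿
            ((∐ fun (_ : Fin n) => F.obj WalkingSpan.zero) ⨿ F.obj WalkingSpan.right)) := by
  constructor
  · intro Y
    infer_instance
  · intro n
    exact ⟨colimit.isoColimitCocone ⟨BarAux.cocone F n, BarAux.isColimit F n⟩⟩
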